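/- arXiv:1405.5088 — 2 statements merged into one kernel-verified Lean document; each statement's English description precedes it below -/
import Mathlib

section
/- Let (a,b,c) be an admissible triple of natural numbers, i.e., a+b+c is even and a ≤ b+c, b ≤ a+c, c ≤ a+b. Then the degree in q of Θ(a,b,c) = (-1)^{(a+b+c)/2} [(a+b+c)/2 + 1] · [(a+b+c)/2]! / ([(-a+b+c)/2]! [(a-b+c)/2]! [(a+b-c)/2]!) equals -(a^2+b^2+c^2)/8 + (ab+ac+bc)/4 + (a+b+c)/4, and its leading coefficient is (-1)^{(a+b+c)/2}. -/
open RatFunc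

/-- The quantum integer `[n] = (t^n - t^{-n})/(t - t^{-1})` as a rational function in
`t = q^{1/2}`; it is in fact a Laurent polynomial in `t`. -/
noncomputable def qint (n : ℕ) : RatFunc ℚ :=
  ((RatFunc.X : RatFunc ℚ)^n - (RatFunc.X : RatFunc ℚ)⁻¹^n) /
    ((RatFunc.X : RatFunc ℚ) - (RatFunc.X : RatFunc ℚ)⁻¹)

/-- The quantum factorial `[n]! = ∏_{k=1}^n [k]`. -/
noncomputable def qfact (n : ℕ) : RatFunc ℚ := ∏ k ∈ Finset.range n, qint (k + 1)

/-- The degree in `q` of a Laurent polynomial in `t = q^{1/2}`, namely half of the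
degree in `t`. -/
noncomputable def qdeg (f : RatFunc ℚ) : ℚ := (f.intDegree : ℚ) / 2

/-- The leading coefficient (coefficient of the top power of `q`). -/
noncomputable def lc (f : RatFunc ℚ) : ℚ := f.num.leadingCoeff / f.denom.leadingCoeff

/-- The theta graph evaluation
`Θ(a,b,c) = (-1)^s [s+1] [s]!/([s-a]![s-b]![s-c]!)` where `s = (a+b+c)/2`. -/
noncomputable def Theta (a b c : ℕ) : RatFunc ℚ :=
  (-1 : RatFunc ℚ)^((a + b + c)/2) * qint ((a + b + c)/2 + 1) * qfact ((a + b + c)/2) /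
    (qfact ((b + c - a)/2) * qfact ((a + c - b)/2) * qfact ((a + b - c)/2))

/- ### Auxiliary lemmas -/

lemma aux_num_mul_eq (p q : Polynomial ℚ) (hq : q ≠ 0) :
    (algebraMap (Polynomial ℚ) (RatFunc ℚ) p / algebraMap (Polynomial ℚ) (RatFunc ℚ) q).num * q
      = p * (algebraMap (Polynomial ℚ) (RatFunc ℚ) p / algebraMap (Polynomial ℚ) (RatFunc ℚ) q).denom := by
  apply RatFunc.algebraMap_injective (K := ℚ)
  rw [map_mul, map_mul]
  have h1 := RatFunc.num_div_denom
    (algebraMap (Polynomial ℚ) (RatFunc ℚ) p / algebraMap (Polynomial ℚ) (RatFunc ℚ) q)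
  rw [div_eq_div_iff (RatFunc.algebraMap_ne_zero (RatFunc.denom_ne_zero _))
    (RatFunc.algebraMap_ne_zero hq)] at h1
  exact h1

lemma aux_intDegree_algebraMap_div (p q : Polynomial ℚ) (hp : p ≠ 0) (hq : q ≠ 0) :
    (algebraMap (Polynomial ℚ) (RatFunc ℚ) p / algebraMap (Polynomial ℚ) (RatFunc ℚ) q).intDegree
      = (p.natDegree : ℤ) - q.natDegree := by
  set f := algebraMap (Polynomial ℚ) (RatFunc ℚ) p / algebraMap (Polynomial ℚ) (RatFunc ℚ) q with hf
  have hf0 : f ≠ 0 :=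
    div_ne_zero (RatFunc.algebraMap_ne_zero hp) (RatFunc.algebraMap_ne_zero hq)
  have hnum : f.num ≠ 0 := RatFunc.num_ne_zero hf0
  have h := congrArg Polynomial.natDegree (aux_num_mul_eq p q hq)
  rw [Polynomial.natDegree_mul hnum hq,
    Polynomial.natDegree_mul hp (RatFunc.denom_ne_zero f)] at h
  rw [RatFunc.intDegree]
  omega

lemma aux_lc_algebraMap_div (p q : Polynomial ℚ) (hq : q ≠ 0) :
    lc (algebraMap (Polynomial ℚ) (RatFunc ℚ) p / algebraMap (Polynomial ℚ) (RatFunc ℚ) q)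
      = p.leadingCoeff / q.leadingCoeff := by
  by_cases hp : p = 0
  · simp [hp, lc]
  have h := congrArg Polynomial.leadingCoeff (aux_num_mul_eq p q hq)
  rw [Polynomial.leadingCoeff_mul, Polynomial.leadingCoeff_mul] at h
  rw [lc, div_eq_div_iff
    (Polynomial.leadingCoeff_ne_zero.mpr (RatFunc.denom_ne_zero _))
    (Polynomial.leadingCoeff_ne_zero.mpr hq)]
  exact h

lemma lc_mul (f g : RatFunc ℚ) : lc (f * g) = lc f * lc g := by
  conv_lhs => rw [← RatFunc.num_div_denom f, ← RatFunc.num_div_denom g]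
  rw [div_mul_div_comm, ← map_mul, ← map_mul,
    aux_lc_algebraMap_div _ _ (mul_ne_zero (RatFunc.denom_ne_zero f) (RatFunc.denom_ne_zero g)),
    Polynomial.leadingCoeff_mul, Polynomial.leadingCoeff_mul, lc, lc, div_mul_div_comm]

lemma lc_div (f g : RatFunc ℚ) : lc (f / g) = lc f / lc g := by
  by_cases hg : g = 0
  · simp [hg, lc]
  have hgn : g.num ≠ 0 := RatFunc.num_ne_zero hg
  have key : f / g = algebraMap (Polynomial ℚ) (RatFunc ℚ) (f.num * g.denom)
      / algebraMap (Polynomial ℚ) (RatFunc ℚ) (f.denom * g.num) := by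
    have e1 : algebraMap (Polynomial ℚ) (RatFunc ℚ) f.denom ≠ 0 :=
      RatFunc.algebraMap_ne_zero (RatFunc.denom_ne_zero f)
    have e2 : algebraMap (Polynomial ℚ) (RatFunc ℚ) g.denom ≠ 0 :=
      RatFunc.algebraMap_ne_zero (RatFunc.denom_ne_zero g)
    have ef := (div_eq_iff e1).mp (RatFunc.num_div_denom f)
    have eg := (div_eq_iff e2).mp (RatFunc.num_div_denom g)
    rw [map_mul, map_mul, ef, eg]
    field_simp
  rw [key, aux_lc_algebraMap_div _ _ (mul_ne_zero (RatFunc.denom_ne_zero f) hgn),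
    Polynomial.leadingCoeff_mul, Polynomial.leadingCoeff_mul, lc, lc]
  have e1 : f.denom.leadingCoeff ≠ 0 :=
    Polynomial.leadingCoeff_ne_zero.mpr (RatFunc.denom_ne_zero f)
  have e2 : g.denom.leadingCoeff ≠ 0 :=
    Polynomial.leadingCoeff_ne_zero.mpr (RatFunc.denom_ne_zero g)
  have e3 : g.num.leadingCoeff ≠ 0 := Polynomial.leadingCoeff_ne_zero.mpr hgn
  field_simp

lemma aux_intDegree_inv (f : RatFunc ℚ) (hf : f ≠ 0) : f⁻¹.intDegree = - f.intDegree := by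
  have h := RatFunc.intDegree_mul (inv_ne_zero hf) hf
  rw [inv_mul_cancel₀ hf, RatFunc.intDegree_one] at h
  omega

lemma aux_intDegree_div (f g : RatFunc ℚ) (hf : f ≠ 0) (hg : g ≠ 0) :
    (f / g).intDegree = f.intDegree - g.intDegree := by
  rw [div_eq_mul_inv, RatFunc.intDegree_mul hf (inv_ne_zero hg), aux_intDegree_inv g hg]
  ring

lemma aux_p_ne (m : ℕ) : (Polynomial.X ^ (2*m+2) - 1 : Polynomial ℚ) ≠ 0 := by
  simpa using Polynomial.X_pow_sub_C_ne_zero (n := 2*m+2) (by omega) (1 : ℚ)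

lemma aux_q_ne (m : ℕ) : (Polynomial.X ^ m * (Polynomial.X ^ 2 - 1) : Polynomial ℚ) ≠ 0 := by
  refine mul_ne_zero (pow_ne_zero m (Polynomial.X_ne_zero (R := ℚ))) ?_
  simpa using Polynomial.X_pow_sub_C_ne_zero (n := 2) (by omega) (1 : ℚ)

lemma qint_eq (m : ℕ) :
    qint (m+1) = algebraMap (Polynomial ℚ) (RatFunc ℚ) (Polynomial.X ^ (2*m+2) - 1)
      / algebraMap (Polynomial ℚ) (RatFunc ℚ) (Polynomial.X ^ m * (Polynomial.X ^ 2 - 1)) := by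
  have hX : (RatFunc.X : RatFunc ℚ) ≠ 0 := RatFunc.X_ne_zero
  have h2 : ((RatFunc.X : RatFunc ℚ) ^ 2 - 1) ≠ 0 := by
    have h : (Polynomial.X ^ 2 - 1 : Polynomial ℚ) ≠ 0 := by
      simpa using Polynomial.X_pow_sub_C_ne_zero (n := 2) (by omega) (1 : ℚ)
    simpa [map_sub, map_pow, RatFunc.algebraMap_X] using RatFunc.algebraMap_ne_zero h
  have hsub : (RatFunc.X : RatFunc ℚ) - (RatFunc.X : RatFunc ℚ)⁻¹ ≠ 0 := by
    have e : (RatFunc.X : RatFunc ℚ) * ((RatFunc.X : RatFunc ℚ) - (RatFunc.X : RatFunc ℚ)⁻¹)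
        = (RatFunc.X : RatFunc ℚ) ^ 2 - 1 := by
      rw [mul_sub, mul_inv_cancel₀ hX]; ring
    intro h
    apply h2
    rw [← e, h, mul_zero]
  rw [qint]
  simp only [map_mul, map_sub, map_pow, map_one, RatFunc.algebraMap_X]
  rw [div_eq_div_iff hsub (mul_ne_zero (pow_ne_zero _ hX) h2)]
  field_simp
  ring
  have e : (RatFunc.X : RatFunc ℚ) * RatFunc.X ^ m * (RatFunc.X)⁻¹ * (RatFunc.X)⁻¹ ^ m = 1 := by
    rw [mul_right_comm _ _ ((RatFunc.X : RatFunc ℚ)⁻¹), mul_inv_cancel₀ hX, one_mul, ← mul_pow,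
      mul_inv_cancel₀ hX, one_pow]
  rw [e]

lemma qint_ne_zero (m : ℕ) : qint (m+1) ≠ 0 := by
  rw [qint_eq]
  exact div_ne_zero (RatFunc.algebraMap_ne_zero (aux_p_ne m))
    (RatFunc.algebraMap_ne_zero (aux_q_ne m))

lemma intDegree_qint (m : ℕ) : (qint (m+1)).intDegree = m := by
  rw [qint_eq, aux_intDegree_algebraMap_div _ _ (aux_p_ne m) (aux_q_ne m)]
  have h1 : (Polynomial.X ^ (2*m+2) - 1 : Polynomial ℚ).natDegree = 2*m+2 := by
    simpa using Polynomial.natDegree_X_pow_sub_C (n := 2*m+2) (r := (1:ℚ))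
  have h2 : (Polynomial.X ^ m * (Polynomial.X ^ 2 - 1) : Polynomial ℚ).natDegree = m + 2 := by
    rw [Polynomial.natDegree_mul (pow_ne_zero m (Polynomial.X_ne_zero (R := ℚ)))
      (by simpa using Polynomial.X_pow_sub_C_ne_zero (n := 2) (by omega) (1 : ℚ)),
      Polynomial.natDegree_X_pow]
    congr 1
    simpa using Polynomial.natDegree_X_pow_sub_C (n := 2) (r := (1:ℚ))
  rw [h1, h2]
  omega

lemma lc_qint (m : ℕ) : lc (qint (m+1)) = 1 := by
  rw [qint_eq, aux_lc_algebraMap_div _ _ (aux_q_ne m)]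
  have h1 : (Polynomial.X ^ (2*m+2) - 1 : Polynomial ℚ).leadingCoeff = 1 := by
    simpa using (Polynomial.monic_X_pow_sub_C (1 : ℚ) (n := 2*m+2) (by omega)).leadingCoeff
  have h2 : (Polynomial.X ^ m * (Polynomial.X ^ 2 - 1) : Polynomial ℚ).leadingCoeff = 1 := by
    have : ((Polynomial.X ^ m : Polynomial ℚ).Monic) := Polynomial.monic_X_pow m
    have h2' : (Polynomial.X ^ 2 - 1 : Polynomial ℚ).Monic := by
      simpa using Polynomial.monic_X_pow_sub_C (1 : ℚ) (n := 2) (by omega)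
    exact (this.mul h2').leadingCoeff
  rw [h1, h2]
  norm_num

lemma qfact_ne_zero (n : ℕ) : qfact n ≠ 0 := by
  induction n with
  | zero => simp [qfact]
  | succ n ih =>
    rw [qfact, Finset.prod_range_succ, ← qfact]
    exact mul_ne_zero ih (qint_ne_zero n)

lemma intDegree_qfact (n : ℕ) : (((qfact n).intDegree : ℚ)) = n * (n - 1) / 2 := by
  induction n with
  | zero => simp [qfact, RatFunc.intDegree_one]
  | succ n ih =>
    rw [qfact, Finset.prod_range_succ, ← qfact,
      RatFunc.intDegree_mul (qfact_ne_zero n) (qint_ne_zero n), intDegree_qint]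
    push_cast
    rw [ih]
    ring

lemma lc_algebraMap' (p : Polynomial ℚ) :
    lc (algebraMap (Polynomial ℚ) (RatFunc ℚ) p) = p.leadingCoeff := by
  rw [lc, RatFunc.num_algebraMap, RatFunc.denom_algebraMap, Polynomial.leadingCoeff_one, div_one]

lemma lc_qfact (n : ℕ) : lc (qfact n) = 1 := by
  induction n with
  | zero =>
    have : (qfact 0) = algebraMap (Polynomial ℚ) (RatFunc ℚ) 1 := by simp [qfact]
    rw [this, lc_algebraMap', Polynomial.leadingCoeff_one]
  | succ n ih =>
    rw [qfact, Finset.prod_range_succ, ← qfact, lc_mul, ih, lc_qint, mul_one]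

lemma intDegree_neg_one_pow (s : ℕ) : ((-1 : RatFunc ℚ) ^ s).intDegree = 0 := by
  rcases Nat.even_or_odd s with h | h
  · rw [h.neg_one_pow, RatFunc.intDegree_one]
  · rw [h.neg_one_pow, RatFunc.intDegree_neg, RatFunc.intDegree_one]

lemma lc_neg_one_pow (s : ℕ) : lc ((-1 : RatFunc ℚ) ^ s) = (-1 : ℚ) ^ s := by
  have key : ((-1 : RatFunc ℚ) ^ s) = algebraMap (Polynomial ℚ) (RatFunc ℚ) ((-1) ^ s) := by
    rw [map_pow, map_neg, map_one]
  rw [key, lc_algebraMap']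
  rcases Nat.even_or_odd s with h | h
  · rw [h.neg_one_pow, h.neg_one_pow, Polynomial.leadingCoeff_one]
  · rw [h.neg_one_pow, h.neg_one_pow]
    simpa using Polynomial.leadingCoeff_neg (1 : Polynomial ℚ)

theorem stmt_1 (a b c : ℕ) (heven : Even (a + b + c))
    (h1 : a ≤ b + c) (h2 : b ≤ a + c) (h3 : c ≤ a + b) :
    qdeg (Theta a b c) =
      -((a : ℚ)^2 + (b : ℚ)^2 + (c : ℚ)^2)/8
        + ((a : ℚ)*b + (a : ℚ)*c + (b : ℚ)*c)/4 + ((a : ℚ) + b + c)/4 ∧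
    lc (Theta a b c) = (-1 : ℚ)^((a + b + c)/2) := by
  obtain ⟨t, ht⟩ := heven
  set s := (a + b + c) / 2 with hsdef
  have hs : a + b + c = 2 * s := by omega
  have hA : (b + c - a) / 2 = s - a := by omega
  have hB : (a + c - b) / 2 = s - b := by omega
  have hC : (a + b - c) / 2 = s - c := by omega
  have ha : a ≤ s := by omega
  have hb : b ≤ s := by omega
  have hc : c ≤ s := by omega
  have hneg : ((-1 : RatFunc ℚ) ^ s) ≠ 0 := pow_ne_zero _ (neg_ne_zero.mpr one_ne_zero)
  have hN : ((-1 : RatFunc ℚ) ^ s * qint (s+1) * qfact s) ≠ 0 :=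
    mul_ne_zero (mul_ne_zero hneg (qint_ne_zero s)) (qfact_ne_zero s)
  have hD : qfact (s-a) * qfact (s-b) * qfact (s-c) ≠ 0 :=
    mul_ne_zero (mul_ne_zero (qfact_ne_zero _) (qfact_ne_zero _)) (qfact_ne_zero _)
  have hTheta : Theta a b c = ((-1 : RatFunc ℚ) ^ s * qint (s+1) * qfact s) /
      (qfact (s-a) * qfact (s-b) * qfact (s-c)) := by
    rw [Theta, hA, hB, hC]
  have hsq : (s : ℚ) = ((a : ℚ) + b + c) / 2 := by
    have h : ((a + b + c : ℕ) : ℚ) = ((2 * s : ℕ) : ℚ) := by rw [hs]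
    push_cast at h
    linarith
  have haq : ((s - a : ℕ) : ℚ) = (s : ℚ) - a := by push_cast [Nat.cast_sub ha]; ring
  have hbq : ((s - b : ℕ) : ℚ) = (s : ℚ) - b := by push_cast [Nat.cast_sub hb]; ring
  have hcq : ((s - c : ℕ) : ℚ) = (s : ℚ) - c := by push_cast [Nat.cast_sub hc]; ring
  constructor
  · rw [qdeg, hTheta, aux_intDegree_div _ _ hN hD,
      RatFunc.intDegree_mul (mul_ne_zero hneg (qint_ne_zero s)) (qfact_ne_zero s),
      RatFunc.intDegree_mul hneg (qint_ne_zero s),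
      RatFunc.intDegree_mul (mul_ne_zero (qfact_ne_zero (s-a)) (qfact_ne_zero (s-b)))
        (qfact_ne_zero (s-c)),
      RatFunc.intDegree_mul (qfact_ne_zero (s-a)) (qfact_ne_zero (s-b)),
      intDegree_neg_one_pow, intDegree_qint]
    push_cast
    rw [intDegree_qfact, intDegree_qfact, intDegree_qfact, intDegree_qfact, haq, hbq, hcq, hsq]
    ring
  · rw [hTheta, lc_div, lc_mul, lc_mul, lc_mul, lc_mul, lc_neg_one_pow, lc_qint,
      lc_qfact, lc_qfact, lc_qfact, lc_qfact, hsdef]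
    ring
end

section
/- Let m_1, m_2 be real numbers with m_1 + m_2 > 1/2, and let c_3(n) = (-3 + 2m_1 + 2m_2 + 2n + 2m_2 n)/(2(1 - 2m_1 - 2m_2)). Then Q(m_1, m_2, n, c_3(n), c_3(n)) with L = 2c_3(n) + n is a quadratic polynomial in n whose coefficient of n^2 equals (2m_1 + 3m_2)^2/(4(m_1 + m_2 - 1/2)). -/
noncomputable def Q (m1 m2 n k1 k2 L : ℝ) : ℝ :=
  k1/2 - 3*k1^2/2 - 3*k1*k2 - k2^2 - k1*m1 - k1^2*m1 - k2*m2 - k2^2*m2 - 6*k1*n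
    - 3*k2*n + 2*m1*n + 4*m2*n - k2*m2*n - 2*n^2 + m1*n^2 + 2*m2*n^2
    + (1/2)*((1 + 8*k1 + 4*k2 + 8*n)*L - 3*L^2)

set_option maxHeartbeats 1000000 in
theorem stmt_15 (m1 m2 : ℝ) (h : m1 + m2 > 1/2)
    (c3 : ℝ → ℝ)
    (hc3 : ∀ n, c3 n = (-3 + 2*m1 + 2*m2 + 2*n + 2*m2*n)/(2*(1 - 2*m1 - 2*m2))) :
    ∃ b c : ℝ, ∀ n : ℝ,
      Q m1 m2 n (c3 n) (c3 n) (2*(c3 n) + n) =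
        ((2*m1 + 3*m2)^2/(4*(m1 + m2 - 1/2)))*n^2 + b*n + c := by
  set d : ℝ := 1 - 2*m1 - 2*m2 with hdd
  have hd : d ≠ 0 := by rw [hdd]; intro h0; linarith [h]
  have h4 : (4:ℝ)*d^2 ≠ 0 := by positivity
  refine ⟨(8 - 2*m2 - 64*m2^2 + 72*m2^3 - 16*m1 - 80*m1*m2 + 176*m1*m2^2 - 16*m1^2
      + 136*m1^2*m2 + 32*m1^3)/(4*d^2),
    (-9/2 + 15*m2 - 14*m2^2 + 4*m2^3 + 15*m1 - 28*m1*m2 + 12*m1*m2^2 - 14*m1^2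
      + 12*m1^2*m2 + 4*m1^3)/(4*d^2), ?_⟩
  intro n
  set k : ℝ := c3 n with hkk
  have hk : 2*d*k = -3 + 2*m1 + 2*m2 + 2*n + 2*m2*n := by
    rw [hkk, hc3 n, hdd]
    field_simp
    exact mul_div_cancel_left₀ _ hd
  have key : Q m1 m2 n k k (2*k + n) =
      (-((2*m1+3*m2)^2)*2*d*n^2
        + (8 - 2*m2 - 64*m2^2 + 72*m2^3 - 16*m1 - 80*m1*m2 + 176*m1*m2^2 - 16*m1^2
            + 136*m1^2*m2 + 32*m1^3)*n
        + (-9/2 + 15*m2 - 14*m2^2 + 4*m2^3 + 15*m1 - 28*m1*m2 + 12*m1*m2^2 - 14*m1^2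
            + 12*m1^2*m2 + 4*m1^3))/(4*d^2) := by
    rw [eq_div_iff h4]
    simp only [Q]
    linear_combination (3/2 + k - n - 4*m2 - 4*m2*k + m2*n + 2*m2^2 + 4*m2^2*k + 2*m2^2*n
      - 4*m1 - 4*m1*k + 2*m1*n + 4*m1*m2 + 8*m1*m2*k + 2*m1*m2*n + 2*m1^2 + 4*m1^2*k) * hk
  have h2 : m1 + m2 - 1/2 ≠ 0 := by intro h0; linarith
  have h2' : (4:ℝ)*(m1+m2-1/2) ≠ 0 := by intro h0; apply h2; linarith
  have ha : (2*m1+3*m2)^2/(4*(m1+m2-1/2)) = (-((2*m1+3*m2)^2)*2*d)/(4*d^2) := by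
    rw [hdd, div_eq_div_iff h2' (by rw [hdd] at h4; exact h4)]; ring
  rw [key, ha, div_mul_eq_mul_div, div_mul_eq_mul_div, ← add_div, ← add_div]
end
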